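/- For every 1 ≤ p < ∞ there exists a constant C > 0 such that for all n ≥ 1 the level-n Schreier graph Γ_n of the Grigorchuk group satisfies λ₁^{(p)}(Γ_n) ≤ C / 2^{np}. -/

import Mathlib

noncomputable section

/-- The generator `a` of the Grigorchuk group acting on finite binary words:
`a(xw) = (1−x)w`. -/
def grigA : List Bool → List Bool
  | [] => []
  | x :: w => (!x) :: w

mutual
  /-- The generator `b`: `b(0w) = 0·a(w)`, `b(1w) = 1·c(w)`. -/
  def grigB : List Bool → List Bool
    | [] => []
    | false :: w => false :: grigA w
    | true :: w => true :: grigC w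
  /-- The generator `c`: `c(0w) = 0·a(w)`, `c(1w) = 1·d(w)`. -/
  def grigC : List Bool → List Bool
    | [] => []
    | false :: w => false :: grigA w
    | true :: w => true :: grigD w
  /-- The generator `d`: `d(0w) = 0·w`, `d(1w) = 1·b(w)`. -/
  def grigD : List Bool → List Bool
    | [] => []
    | false :: w => false :: w
    | true :: w => true :: grigB w
end

/-- The level-`n` Schreier graph `Γ_n` of the Grigorchuk group: vertices are binary words of
length `n`, and distinct `x, y` are adjacent iff `y ∈ {a(x), b(x), c(x), d(x)}`
(the relation is symmetrized; since `a, b, c, d` are involutions it is the same relation). -/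
def grigGraph (n : ℕ) : SimpleGraph (List.Vector Bool n) where
  Adj x y := x ≠ y ∧ ∃ s ∈ [grigA, grigB, grigC, grigD],
    s x.toList = y.toList ∨ s y.toList = x.toList
  symm := by
    constructor
    rintro x y ⟨h1, s, hs, h2⟩
    exact ⟨h1.symm, s, hs, h2.symm⟩
  loopless := ⟨fun x h => h.1 rfl⟩

/-- The first positive eigenvalue `λ₁^{(p)}` of the discrete `p`-Laplacian of the finite graph
with edge multiplicities `ω`, defined via the variational characterization (3). -/
def lambdaOne {V : Type*} [Fintype V] (ω : V → V → ℕ) (p : ℝ) : ℝ :=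
  sInf {r : ℝ | ∃ f : V → ℝ, (¬ ∀ x y : V, f x = f y) ∧
    r = (∑ x : V, ∑ y : V, |f x - f y| ^ p * (ω x y : ℝ)) /
        (⨅ α : ℝ, ∑ x : V, |f x - α| ^ p)}

/-- Edge multiplicities of the level-`n` Schreier graph of the Grigorchuk group:
`ω(x,y) = #{s ∈ {a,b,c,d} : s(x) = y}`. -/
def grigOmega (n : ℕ) (x y : List.Vector Bool n) : ℕ :=
  (([grigA, grigB, grigC, grigD].filter (fun s => s x.toList = y.toList))).length

/-! ### auxiliary: the position function `phi` -/

def phi : List Bool → ℕ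
  | [] => 0
  | true :: w => 2 * phi w + phi w % 2
  | false :: w => 2 * phi w + (1 - phi w % 2)

lemma phi_lt (w : List Bool) : phi w < 2 ^ w.length := by
  induction w with
  | nil => simp [phi]
  | cons x w ih =>
    have := Nat.mod_lt (phi w) (y := 2) (by norm_num)
    cases x <;> simp [phi, pow_succ] <;> omega

lemma grigA_length (w : List Bool) : (grigA w).length = w.length := by
  cases w <;> simp [grigA]

lemma grigBCD_length (w : List Bool) :
    (grigB w).length = w.length ∧ (grigC w).length = w.length ∧
      (grigD w).length = w.length := by
  induction w with
  | nil => exact ⟨rfl, rfl, rfl⟩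
  | cons x w ih =>
    cases x <;>
      exact ⟨by simp [grigB, grigA_length, ih.2.1], by simp [grigC, grigA_length, ih.2.2],
        by simp [grigD, ih.1]⟩

lemma phi_inj : ∀ w v : List Bool, w.length = v.length → phi w = phi v → w = v := by
  intro w
  induction w with
  | nil => intro v hl _; cases v <;> simp_all
  | cons x w ih =>
    intro v hl hp
    cases v with
    | nil => simp at hl
    | cons y v =>
      simp only [List.length_cons, Nat.succ_inj] at hl
      have h2 : phi w % 2 < 2 := Nat.mod_lt _ (by norm_num)
      have h2' : phi v % 2 < 2 := Nat.mod_lt _ (by norm_num)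
      have hwv : phi w = phi v := by
        cases x <;> cases y <;> simp only [phi] at hp <;> omega
      have hxy : x = y := by
        cases x <;> cases y <;> simp only [phi] at hp <;> first | rfl | omega
      rw [hxy, ih v hl hwv]

lemma phi_A_rel (w : List Bool) :
    phi (grigA w) = phi w ∨ (phi (grigA w) = phi w + 1 ∧ phi w % 2 = 0) ∨
      (phi w = phi (grigA w) + 1 ∧ phi (grigA w) % 2 = 0) := by
  cases w with
  | nil => simp [grigA]
  | cons x w =>
    cases x <;> simp only [grigA, Bool.not_false, Bool.not_true, phi] <;> omega

lemma step_true (k k' : ℕ)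
    (h : k' = k ∨ (k' = k + 1 ∧ k % 2 = 1) ∨ (k = k' + 1 ∧ k' % 2 = 1)) :
    2 * k' + k' % 2 = 2 * k + k % 2 ∨
      (2 * k' + k' % 2 = 2 * k + k % 2 + 1 ∧ (2 * k + k % 2) % 2 = 1) ∨
      (2 * k + k % 2 = 2 * k' + k' % 2 + 1 ∧ (2 * k' + k' % 2) % 2 = 1) := by
  omega

lemma step_false (k k' : ℕ)
    (h : k' = k ∨ (k' = k + 1 ∧ k % 2 = 0) ∨ (k = k' + 1 ∧ k' % 2 = 0)) :
    2 * k' + (1 - k' % 2) = 2 * k + (1 - k % 2) ∨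
      (2 * k' + (1 - k' % 2) = 2 * k + (1 - k % 2) + 1 ∧ (2 * k + (1 - k % 2)) % 2 = 1) ∨
      (2 * k + (1 - k % 2) = 2 * k' + (1 - k' % 2) + 1 ∧ (2 * k' + (1 - k' % 2)) % 2 = 1) := by
  omega

lemma phi_BCD_rel (w : List Bool) :
    (phi (grigB w) = phi w ∨ (phi (grigB w) = phi w + 1 ∧ phi w % 2 = 1) ∨
      (phi w = phi (grigB w) + 1 ∧ phi (grigB w) % 2 = 1)) ∧
    (phi (grigC w) = phi w ∨ (phi (grigC w) = phi w + 1 ∧ phi w % 2 = 1) ∨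
      (phi w = phi (grigC w) + 1 ∧ phi (grigC w) % 2 = 1)) ∧
    (phi (grigD w) = phi w ∨ (phi (grigD w) = phi w + 1 ∧ phi w % 2 = 1) ∨
      (phi w = phi (grigD w) + 1 ∧ phi (grigD w) % 2 = 1)) := by
  induction w with
  | nil => exact ⟨Or.inl rfl, Or.inl rfl, Or.inl rfl⟩
  | cons x w ih =>
    obtain ⟨hb, hc, hd⟩ := ih
    have haf : phi (grigA w) = phi w ∨ (phi (grigA w) = phi w + 1 ∧ phi w % 2 = 0) ∨
        (phi w = phi (grigA w) + 1 ∧ phi (grigA w) % 2 = 0) := phi_A_rel w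
    cases x with
    | false =>
      refine ⟨?_, ?_, Or.inl rfl⟩
      · show 2 * phi (grigA w) + (1 - phi (grigA w) % 2) = 2 * phi w + (1 - phi w % 2) ∨ _ ∨ _
        exact step_false (phi w) (phi (grigA w)) haf
      · show 2 * phi (grigA w) + (1 - phi (grigA w) % 2) = 2 * phi w + (1 - phi w % 2) ∨ _ ∨ _
        exact step_false (phi w) (phi (grigA w)) haf
    | true =>
      refine ⟨?_, ?_, ?_⟩
      · show 2 * phi (grigC w) + phi (grigC w) % 2 = 2 * phi w + phi w % 2 ∨ _ ∨ _
        exact step_true (phi w) (phi (grigC w)) hc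
      · show 2 * phi (grigD w) + phi (grigD w) % 2 = 2 * phi w + phi w % 2 ∨ _ ∨ _
        exact step_true (phi w) (phi (grigD w)) hd
      · show 2 * phi (grigB w) + phi (grigB w) % 2 = 2 * phi w + phi w % 2 ∨ _ ∨ _
        exact step_true (phi w) (phi (grigB w)) hb

lemma phi_step {s : List Bool → List Bool}
    (hs : s ∈ [grigA, grigB, grigC, grigD]) (w : List Bool) :
    phi (s w) ≤ phi w + 1 ∧ phi w ≤ phi (s w) + 1 := by
  have hA := phi_A_rel w
  have hBCD := phi_BCD_rel w
  simp only [List.mem_cons, List.not_mem_nil, or_false] at hs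
  rcases hs with rfl | rfl | rfl | rfl
  · omega
  · have := hBCD.1; omega
  · have := hBCD.2.1; omega
  · have := hBCD.2.2; omega

lemma grig_length {s : List Bool → List Bool}
    (hs : s ∈ [grigA, grigB, grigC, grigD]) (w : List Bool) :
    (s w).length = w.length := by
  simp only [List.mem_cons, List.not_mem_nil, or_false] at hs
  rcases hs with rfl | rfl | rfl | rfl
  · exact grigA_length w
  · exact (grigBCD_length w).1
  · exact (grigBCD_length w).2.1
  · exact (grigBCD_length w).2.2

lemma omega_expand (n : ℕ) (x y : List.Vector Bool n) : (grigOmega n x y : ℝ) =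
      (if grigA x.toList = y.toList then (1:ℝ) else 0) +
      (if grigB x.toList = y.toList then (1:ℝ) else 0) +
      (if grigC x.toList = y.toList then (1:ℝ) else 0) +
      (if grigD x.toList = y.toList then (1:ℝ) else 0) := by
  simp only [grigOmega, List.filter_cons, List.filter_nil, decide_eq_true_eq]
  split_ifs <;> norm_num

/-- Proposition 9: for each `1 ≤ p < ∞` there is `C > 0` such that the
`p`-spectral gap of the Schreier graphs `Γ_n` of the Grigorchuk group satisfies
`λ₁^{(p)}(Γ_n) ≤ C / 2^{np}`. -/
theorem statement_8 (p : ℝ) (hp : 1 ≤ p) :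
    ∃ C : ℝ, 0 < C ∧ ∀ n : ℕ, 1 ≤ n →
      lambdaOne (grigOmega n) p ≤ C / 2 ^ ((n : ℝ) * p) := by
  have hp0 : (0:ℝ) ≤ p := le_trans zero_le_one hp
  refine ⟨16 * 4 ^ p, by positivity, ?_⟩
  intro n hn
  obtain ⟨m, rfl⟩ : ∃ m, n = m + 1 := ⟨n - 1, by omega⟩
  set f : List.Vector Bool (m+1) → ℝ := fun x => (phi x.toList : ℝ) with hf
  set N : ℕ := 2 ^ (m+1) with hN
  have hNpos : (0:ℝ) < (N:ℝ) := by positivity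
  set Kr : ℝ := (N:ℝ) / 4 with hKr
  have hKrpos : 0 < Kr := by positivity
  have hinjV : ∀ x y : List.Vector Bool (m+1),
      phi x.toList = phi y.toList → x = y := by
    intro x y h
    exact List.Vector.toList_injective
      (phi_inj _ _ (by rw [x.toList_length, y.toList_length]) h)
  -- f is nonconstant
  have hnc : ¬ ∀ x y : List.Vector Bool (m+1), f x = f y := by
    intro h
    have h1 := h (false ::ᵥ List.Vector.replicate m false)
      (true ::ᵥ List.Vector.replicate m false)
    simp only [hf] at h1
    rw [Nat.cast_inj] at h1
    rw [List.Vector.toList_cons, List.Vector.toList_cons] at h1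
    have h2 : phi (List.Vector.replicate m false).toList % 2 < 2 :=
      Nat.mod_lt _ (by norm_num)
    simp only [phi] at h1
    omega
  have hmem : (∑ x : List.Vector Bool (m+1), ∑ y : List.Vector Bool (m+1),
        |f x - f y| ^ p * (grigOmega (m+1) x y : ℝ)) /
      (⨅ α : ℝ, ∑ x : List.Vector Bool (m+1), |f x - α| ^ p) ∈
      {r : ℝ | ∃ f : List.Vector Bool (m+1) → ℝ,
        (¬ ∀ x y : List.Vector Bool (m+1), f x = f y) ∧
        r = (∑ x : List.Vector Bool (m+1), ∑ y : List.Vector Bool (m+1),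
              |f x - f y| ^ p * (grigOmega (m+1) x y : ℝ)) /
            (⨅ α : ℝ, ∑ x : List.Vector Bool (m+1), |f x - α| ^ p)} := ⟨f, hnc, rfl⟩
  have hbdd : BddBelow {r : ℝ | ∃ f : List.Vector Bool (m+1) → ℝ,
      (¬ ∀ x y : List.Vector Bool (m+1), f x = f y) ∧
      r = (∑ x : List.Vector Bool (m+1), ∑ y : List.Vector Bool (m+1),
            |f x - f y| ^ p * (grigOmega (m+1) x y : ℝ)) /
          (⨅ α : ℝ, ∑ x : List.Vector Bool (m+1), |f x - α| ^ p)} := by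
    refine ⟨0, ?_⟩
    rintro r ⟨g, -, rfl⟩
    apply div_nonneg
    · refine Finset.sum_nonneg fun x _ => Finset.sum_nonneg fun y _ => ?_
      exact mul_nonneg (Real.rpow_nonneg (abs_nonneg _) p) (Nat.cast_nonneg _)
    · exact Real.iInf_nonneg fun α =>
        Finset.sum_nonneg fun x _ => Real.rpow_nonneg (abs_nonneg _) p
  -- numerator bound
  have hperstep : ∀ (s : List Bool → List Bool), s ∈ [grigA, grigB, grigC, grigD] →
      ∀ x : List.Vector Bool (m+1), ∑ y : List.Vector Bool (m+1),
        |f x - f y| ^ p * (if s x.toList = y.toList then (1:ℝ) else 0) ≤ 1 := by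
    intro s hs x
    set v : List.Vector Bool (m+1) :=
      ⟨s x.toList, by rw [grig_length hs, x.toList_length]⟩ with hv
    have hcond : ∀ y : List.Vector Bool (m+1), (s x.toList = y.toList) ↔ (y = v) := by
      intro y
      constructor
      · intro h; exact List.Vector.toList_injective (by rw [← h]; rfl)
      · rintro rfl; rfl
    calc ∑ y : List.Vector Bool (m+1),
          |f x - f y| ^ p * (if s x.toList = y.toList then (1:ℝ) else 0)
        = ∑ y : List.Vector Bool (m+1), (if y = v then |f x - f y| ^ p else 0) := by
          refine Finset.sum_congr rfl fun y _ => ?_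
          rw [if_congr (hcond y) rfl rfl, mul_ite, mul_one, mul_zero]
      _ = |f x - f v| ^ p := by rw [Finset.sum_ite_eq' Finset.univ v]; simp
      _ ≤ 1 := by
          apply Real.rpow_le_one (abs_nonneg _) _ hp0
          have hst := phi_step hs x.toList
          have h1 : (phi (s x.toList) : ℝ) ≤ (phi x.toList : ℝ) + 1 := by
            exact_mod_cast hst.1
          have h2 : (phi x.toList : ℝ) ≤ (phi (s x.toList) : ℝ) + 1 := by
            exact_mod_cast hst.2
          have hvl : f v = (phi (s x.toList) : ℝ) := rfl
          have hfx : f x = (phi x.toList : ℝ) := rfl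
          rw [hvl, hfx, abs_le]
          constructor <;> linarith
  have hnum : (∑ x : List.Vector Bool (m+1), ∑ y : List.Vector Bool (m+1),
      |f x - f y| ^ p * (grigOmega (m+1) x y : ℝ)) ≤ 4 * (N:ℝ) := by
    have hx : ∀ x : List.Vector Bool (m+1), ∑ y : List.Vector Bool (m+1),
        |f x - f y| ^ p * (grigOmega (m+1) x y : ℝ) ≤ 4 := by
      intro x
      calc ∑ y : List.Vector Bool (m+1), |f x - f y| ^ p * (grigOmega (m+1) x y : ℝ)
          = (∑ y : List.Vector Bool (m+1),
              |f x - f y| ^ p * (if grigA x.toList = y.toList then (1:ℝ) else 0)) +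
            (∑ y : List.Vector Bool (m+1),
              |f x - f y| ^ p * (if grigB x.toList = y.toList then (1:ℝ) else 0)) +
            (∑ y : List.Vector Bool (m+1),
              |f x - f y| ^ p * (if grigC x.toList = y.toList then (1:ℝ) else 0)) +
            (∑ y : List.Vector Bool (m+1),
              |f x - f y| ^ p * (if grigD x.toList = y.toList then (1:ℝ) else 0)) := by
            rw [← Finset.sum_add_distrib, ← Finset.sum_add_distrib, ← Finset.sum_add_distrib]
            refine Finset.sum_congr rfl fun y _ => ?_
            rw [omega_expand (m+1) x y]; ring
        _ ≤ 1 + 1 + 1 + 1 := by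
            have g1 := hperstep grigA (by simp) x
            have g2 := hperstep grigB (by simp) x
            have g3 := hperstep grigC (by simp) x
            have g4 := hperstep grigD (by simp) x
            linarith
        _ = 4 := by norm_num
    calc ∑ x : List.Vector Bool (m+1), ∑ y : List.Vector Bool (m+1),
          |f x - f y| ^ p * (grigOmega (m+1) x y : ℝ)
        ≤ ∑ _x : List.Vector Bool (m+1), (4:ℝ) := Finset.sum_le_sum fun x _ => hx x
      _ = 4 * (N:ℝ) := by
          rw [Finset.sum_const, Finset.card_univ, nsmul_eq_mul]
          have hc : Fintype.card (List.Vector Bool (m+1)) = N := by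
            rw [card_vector, Fintype.card_bool]
          rw [hc]; ring
  -- denominator bound
  have himg : Finset.image (fun x : List.Vector Bool (m+1) => phi x.toList)
      Finset.univ = Finset.range N := by
    apply Finset.eq_of_subset_of_card_le
    · intro k hk
      simp only [Finset.mem_image, Finset.mem_univ, true_and] at hk
      obtain ⟨x, rfl⟩ := hk
      refine Finset.mem_range.mpr ?_
      have := phi_lt x.toList
      rwa [x.toList_length] at this
    · rw [Finset.card_range, Finset.card_image_of_injOn
        (fun x _ y _ h => hinjV x y h), Finset.card_univ]
      rw [card_vector, Fintype.card_bool]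
  have hsum_eq : ∀ α : ℝ, ∑ x : List.Vector Bool (m+1), |f x - α| ^ p =
      ∑ k ∈ Finset.range N, |(k:ℝ) - α| ^ p := by
    intro α
    rw [← himg, Finset.sum_image (fun x _ y _ h => hinjV x y h)]
  have hden : ∀ α : ℝ, Kr * Kr ^ p ≤ ∑ k ∈ Finset.range N, |(k:ℝ) - α| ^ p := by
    intro α
    have main : ∀ T : Finset ℕ, T ⊆ Finset.range N →
        (∀ k ∈ T, Kr ≤ |(k:ℝ) - α|) → Kr ≤ (T.card : ℝ) →
        Kr * Kr ^ p ≤ ∑ k ∈ Finset.range N, |(k:ℝ) - α| ^ p := by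
      intro T hT hfar hcard
      have h1 : ∑ k ∈ T, |(k:ℝ) - α| ^ p ≤ ∑ k ∈ Finset.range N, |(k:ℝ) - α| ^ p :=
        Finset.sum_le_sum_of_subset_of_nonneg hT
          (fun k _ _ => Real.rpow_nonneg (abs_nonneg _) p)
      have h3 : (T.card : ℝ) * Kr ^ p ≤ ∑ k ∈ T, |(k:ℝ) - α| ^ p := by
        calc (T.card : ℝ) * Kr ^ p = ∑ _k ∈ T, Kr ^ p := by
              rw [Finset.sum_const, nsmul_eq_mul]
          _ ≤ ∑ k ∈ T, |(k:ℝ) - α| ^ p := Finset.sum_le_sum fun k hk =>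
              Real.rpow_le_rpow hKrpos.le (hfar k hk) hp0
      have h4 : Kr * Kr ^ p ≤ (T.card : ℝ) * Kr ^ p :=
        mul_le_mul_of_nonneg_right hcard (Real.rpow_nonneg hKrpos.le p)
      linarith
    rcases Nat.lt_or_ge (m+1) 2 with hm | hm
    · -- n = 1
      have hm1 : m = 0 := by omega
      subst hm1
      have hN2 : N = 2 := by norm_num [hN]
      have hKrval : Kr = 1 / 2 := by rw [hKr, hN2]; norm_num
      rcases le_or_gt α (1/2) with hα | hα
      · refine main {1} (by rw [hN2]; decide) ?_ (by rw [hKrval]; norm_num)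
        intro k hk
        simp only [Finset.mem_singleton] at hk
        subst hk
        rw [hKrval, abs_of_nonneg (by push_cast; linarith)]
        push_cast
        linarith
      · refine main {0} (by rw [hN2]; decide) ?_ (by rw [hKrval]; norm_num)
        intro k hk
        simp only [Finset.mem_singleton] at hk
        subst hk
        rw [hKrval, abs_of_nonpos (by push_cast; linarith)]
        push_cast
        linarith
    · -- n ≥ 2
      set K : ℕ := 2 ^ (m - 1) with hK
      have hNK : N = 4 * K := by
        rw [hN, hK]
        have hme : m + 1 = (m - 1) + 2 := by omega
        rw [hme, pow_add]
        ring
      have hKrK : Kr = (K : ℝ) := by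
        rw [hKr, hNK]; push_cast; ring
      rcases le_or_gt α ((N:ℝ)/2) with hα | hα
      · refine main (Finset.Ico (3*K) (4*K)) ?_ ?_ ?_
        · intro k hk
          rw [Finset.mem_range, hNK]
          exact (Finset.mem_Ico.mp hk).2
        · intro k hk
          obtain ⟨hk1, -⟩ := Finset.mem_Ico.mp hk
          have hk1' : (3*(K:ℝ)) ≤ (k:ℝ) := by exact_mod_cast hk1
          have hα' : α ≤ 2*(K:ℝ) := by
            rw [hNK] at hα; push_cast at hα; linarith
          rw [hKrK, abs_of_nonneg (by linarith)]
          linarith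
        · rw [Nat.card_Ico, hKrK]
          have h43 : 4*K - 3*K = K := by omega
          rw [h43]
      · refine main (Finset.range K) ?_ ?_ ?_
        · intro k hk
          rw [Finset.mem_range] at hk ⊢
          omega
        · intro k hk
          have hkK : k + 1 ≤ K := Finset.mem_range.mp hk
          have hk' : (k:ℝ) + 1 ≤ (K:ℝ) := by exact_mod_cast hkK
          have hα' : (2*(K:ℝ)) < α := by
            rw [hNK] at hα; push_cast at hα; linarith
          rw [hKrK, abs_of_nonpos (by linarith)]
          linarith
        · rw [Finset.card_range, hKrK]
  -- put everything together
  have hdenom : Kr * Kr ^ p ≤ ⨅ α : ℝ, ∑ x : List.Vector Bool (m+1), |f x - α| ^ p := by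
    refine le_ciInf fun α => ?_
    rw [hsum_eq α]
    exact hden α
  have hfinal : (∑ x : List.Vector Bool (m+1), ∑ y : List.Vector Bool (m+1),
      |f x - f y| ^ p * (grigOmega (m+1) x y : ℝ)) /
      (⨅ α : ℝ, ∑ x : List.Vector Bool (m+1), |f x - α| ^ p) ≤
      (4 * (N:ℝ)) / (Kr * Kr ^ p) :=
    div_le_div₀ (by positivity) hnum (by positivity) hdenom
  have halg : (4 * (N:ℝ)) / (Kr * Kr ^ p) = 16 * 4 ^ p / 2 ^ (((m+1 : ℕ) : ℝ) * p) := by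
    have h2np : (2:ℝ) ^ (((m+1 : ℕ) : ℝ) * p) = (N:ℝ) ^ p := by
      rw [Real.rpow_mul (by norm_num), Real.rpow_natCast, hN]
      push_cast
      ring_nf
    rw [h2np, hKr, Real.div_rpow hNpos.le (by norm_num)]
    have hNp : (0:ℝ) < (N:ℝ) ^ p := Real.rpow_pos_of_pos hNpos p
    have h4p : (0:ℝ) < (4:ℝ) ^ p := Real.rpow_pos_of_pos (by norm_num) p
    field_simp
    ring
  calc lambdaOne (grigOmega (m+1)) p
      ≤ (∑ x : List.Vector Bool (m+1), ∑ y : List.Vector Bool (m+1),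
          |f x - f y| ^ p * (grigOmega (m+1) x y : ℝ)) /
        (⨅ α : ℝ, ∑ x : List.Vector Bool (m+1), |f x - α| ^ p) := csInf_le hbdd hmem
    _ ≤ (4 * (N:ℝ)) / (Kr * Kr ^ p) := hfinal
    _ = 16 * 4 ^ p / 2 ^ (((m+1 : ℕ) : ℝ) * p) := halg
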